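/- Let α, β be nonzero complex numbers with |α|² + |β|² = 1 and set p = (conj(β)/conj(α))·(1+|α|²). Let u be the unique real root of the cubic z³ + 3z² + 2z − 1. Then |p| ≥ 1 if and only if |α|² ≤ 1/(u+1). -/

import Mathlib

open scoped ComplexConjugate

set_option maxHeartbeats 1000000 in
/-- `|p| ≥ 1` iff `|α|² ≤ 1/(u+1)`, where `p = (conj β / conj α)(1 + |α|²)` and `u` is
the unique real root of `z³ + 3z² + 2z − 1`. -/
theorem abs_p_ge_one_iff (α β : ℂ) (hα : α ≠ 0) (hβ : β ≠ 0)
    (hnorm : ‖α‖ ^ 2 + ‖β‖ ^ 2 = 1)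
    (p : ℂ) (hp : p = (conj β / conj α) * (1 + (‖α‖ : ℂ) ^ 2))
    (u : ℝ) (hu : u ^ 3 + 3 * u ^ 2 + 2 * u - 1 = 0)
    (huniq : ∀ y : ℝ, y ^ 3 + 3 * y ^ 2 + 2 * y - 1 = 0 → y = u) :
    1 ≤ ‖p‖ ↔ ‖α‖ ^ 2 ≤ 1 / (u + 1) := by
  have ha : 0 < ‖α‖ := norm_pos_iff.mpr hα
  have hb : 0 < ‖β‖ := norm_pos_iff.mpr hβ
  set a := ‖α‖ ^ 2 with hadef
  set b := ‖β‖ ^ 2 with hbdef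
  have ha0 : 0 < a := by positivity
  have hb0 : 0 < b := by positivity
  have hu0 : 0 < u := by
    by_contra h
    push_neg at h
    nlinarith [sq_nonneg (u + 1), sq_nonneg u, sq_nonneg (u + 2), sq_nonneg (u^2 + 3*u + 1)]
  have hv0 : (0:ℝ) < u + 1 := by linarith
  have hv3 : (u + 1)^3 = (u + 1) + 1 := by nlinarith [hu]
  -- compute |p|
  have hcast : (1 + ((‖α‖ : ℂ)) ^ 2) = ((1 + a : ℝ) : ℂ) := by
    rw [hadef]; push_cast; ring
  have habs : ‖p‖ = ‖β‖ / ‖α‖ * (1 + a) := by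
    rw [hp, norm_mul, norm_div, Complex.norm_conj, Complex.norm_conj, hcast,
      Complex.norm_of_nonneg (by positivity)]
  have key1 : 1 ≤ ‖p‖ ↔ a ^ 3 + a ^ 2 ≤ 1 := by
    rw [habs, div_mul_eq_mul_div, le_div_iff₀ ha, one_mul]
    constructor
    · intro h
      nlinarith [h, hnorm, ha.le, hb.le, mul_nonneg ha.le hb.le, mul_nonneg (mul_nonneg ha.le hb.le) (by positivity : (0:ℝ) ≤ 1 + a)]
    · intro h
      have h2 : a ≤ b * (1 + a)^2 := by nlinarith [h, hnorm]
      have h3 : ‖α‖ ^ 2 ≤ (‖β‖ * (1 + a)) ^ 2 := by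
        rw [← hadef]; nlinarith [h2]
      exact (pow_le_pow_iff_left₀ ha.le (by positivity) two_ne_zero).mp h3
  rw [key1, le_div_iff₀ hv0]
  constructor
  · intro h
    by_contra hc
    push_neg at hc
    have t1 : (0:ℝ) < a * (u + 1) - 1 := by linarith
    nlinarith [mul_le_mul_of_nonneg_right h (by positivity : (0:ℝ) ≤ (u+1)^3), hv3,
      mul_pos t1 (by positivity : (0:ℝ) < (a*(u+1))^2 + a*(u+1) + 1),
      mul_pos t1 (by positivity : (0:ℝ) < (u+1) * (a*(u+1) + 1))]
  · intro h
    by_contra hc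
    push_neg at hc
    have t1 : a*(u+1) ≤ 1 := h
    have h1 : (a*(u+1))^3 ≤ 1 := pow_le_one₀ (mul_pos ha0 hv0).le t1
    have h2 : (a*(u+1))^2 * (u+1) ≤ 1 * (u+1) :=
      mul_le_mul_of_nonneg_right (pow_le_one₀ (mul_pos ha0 hv0).le t1) hv0.le
    nlinarith [mul_lt_mul_of_pos_right hc (by positivity : (0:ℝ) < (u+1)^3), hv3, h1, h2]
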